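/- For all natural numbers n ≥ 1 and r with 1 ≤ r ≤ n, r/n ≤ H_n − H_{n−r}, where H_m := ∑_{k=1}^{m} 1/k is the m-th harmonic number (H_0 := 0). Consequently, for any nonnegative losses ℓ : Fin n → ℝ and any ranks rᵢ forming a permutation of {1,…,n}, the SELE score (1/n²)∑_{i=1}^{n} rᵢ·ℓ(i) is at most the empirical AURC (1/n)∑_{i=1}^{n} (H_n − H_{n−rᵢ})·ℓ(i). -/

import Mathlib

/-- `harmonicR m = H_m = ∑_{k=1}^m 1/k`, with `H_0 = 0`. -/
noncomputable def harmonicR (m : ℕ) : ℝ := ∑ k ∈ Finset.range m, (1 : ℝ) / (k + 1)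

lemma harmonic_weight (n r : ℕ) (hn : 1 ≤ n) (hr : 1 ≤ r) (hrn : r ≤ n) :
    (r : ℝ) / n ≤ harmonicR n - harmonicR (n - r) := by
  have hnr : n - r ≤ n := Nat.sub_le _ _
  have hsplit : harmonicR n - harmonicR (n - r)
      = ∑ k ∈ Finset.Ico (n - r) n, (1 : ℝ) / (k + 1) := by
    unfold harmonicR
    rw [Finset.range_eq_Ico,
      ← Finset.sum_Ico_consecutive _ (Nat.zero_le (n - r)) hnr, Finset.range_eq_Ico]
    ring
  rw [hsplit]
  have hbound : ∀ k ∈ Finset.Ico (n - r) n, (1 : ℝ) / n ≤ 1 / (k + 1) := by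
    intro k hk
    rw [Finset.mem_Ico] at hk
    apply one_div_le_one_div_of_le
    · positivity
    · exact_mod_cast Nat.succ_le_of_lt hk.2
  calc (r : ℝ) / n = (Finset.Ico (n - r) n).card • ((1 : ℝ) / n) := by
        rw [Nat.card_Ico, Nat.sub_sub_self hrn]
        simp [div_eq_mul_inv, nsmul_eq_mul]
    _ = ∑ _k ∈ Finset.Ico (n - r) n, (1 : ℝ) / n := by
        rw [Finset.sum_const]
    _ ≤ ∑ k ∈ Finset.Ico (n - r) n, (1 : ℝ) / (k + 1) :=
        Finset.sum_le_sum hbound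

/-- The SELE weight `r/n` is at most the plug-in AURC weight `H_n − H_{n−r}`,
hence the SELE score lower bounds the empirical AURC for nonnegative losses and
any ranks forming a permutation of `{1,…,n}`. -/
theorem sele_le_empirical_aurc (n : ℕ) (hn : 1 ≤ n) :
    (∀ r : ℕ, 1 ≤ r → r ≤ n → (r : ℝ) / n ≤ harmonicR n - harmonicR (n - r))
    ∧ ∀ σ : Equiv.Perm (Fin n), ∀ ℓ : Fin n → ℝ, (∀ i, 0 ≤ ℓ i) →
      (1 / (n : ℝ) ^ 2) * ∑ i, (((σ i : ℕ) + 1 : ℕ) : ℝ) * ℓ i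
        ≤ (1 / (n : ℝ)) * ∑ i, (harmonicR n - harmonicR (n - ((σ i : ℕ) + 1))) * ℓ i := by
  refine ⟨fun r hr hrn => harmonic_weight n r hn hr hrn, fun σ ℓ hℓ => ?_⟩
  have hn0 : (0 : ℝ) < n := by exact_mod_cast hn
  rw [mul_comm ((1 : ℝ) / n ^ 2) _, mul_comm ((1 : ℝ) / n) _, Finset.sum_mul, Finset.sum_mul]
  apply Finset.sum_le_sum
  intro i _
  have h1 : 1 ≤ (σ i : ℕ) + 1 := Nat.le_add_left _ _
  have h2 : (σ i : ℕ) + 1 ≤ n := (σ i).2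
  have hw := harmonic_weight n ((σ i : ℕ) + 1) hn h1 h2
  have key : (((σ i : ℕ) + 1 : ℕ) : ℝ) * (1 / n ^ 2)
      ≤ (harmonicR n - harmonicR (n - ((σ i : ℕ) + 1))) * (1 / n) := by
    rw [mul_one_div, mul_one_div, sq, ← div_div]
    gcongr
  calc (((σ i : ℕ) + 1 : ℕ) : ℝ) * ℓ i * (1 / n ^ 2)
      = ((((σ i : ℕ) + 1 : ℕ) : ℝ) * (1 / n ^ 2)) * ℓ i := by ring
    _ ≤ ((harmonicR n - harmonicR (n - ((σ i : ℕ) + 1))) * (1 / n)) * ℓ i :=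
        mul_le_mul_of_nonneg_right key (hℓ i)
    _ = (harmonicR n - harmonicR (n - ((σ i : ℕ) + 1))) * ℓ i * (1 / n) := by ring
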